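/- There exists a constant c > 0 such that for every s ∈ (0,1] and every m₄ ∈ ℤ³ with m₄ ≠ 0, ∑_{m₃ ∈ ℤ³, m₃ ≠ 0, m₃ ≠ −m₄} e^{−|m₃|² s} / (|m₃| · |m₃ + m₄|) ≤ c / (s |m₄|). -/

import Mathlib

open Set ENNReal

/-- Euclidean norm of a point of `ℤ³`. -/
noncomputable def znorm (m : ℤ × ℤ × ℤ) : ℝ :=
  Real.sqrt ((m.1 : ℝ) ^ 2 + (m.2.1 : ℝ) ^ 2 + (m.2.2 : ℝ) ^ 2)

namespace Stmt14Aux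
lemma znorm_nonneg (m : ℤ × ℤ × ℤ) : 0 ≤ znorm m := Real.sqrt_nonneg _

noncomputable def phi (m : ℤ × ℤ × ℤ) : EuclideanSpace ℝ (Fin 3) :=
  WithLp.toLp 2 ![(m.1 : ℝ), (m.2.1 : ℝ), (m.2.2 : ℝ)]

lemma znorm_eq (m : ℤ × ℤ × ℤ) : znorm m = ‖phi m‖ := by
  rw [EuclideanSpace.norm_eq]
  simp [phi, znorm, Fin.sum_univ_three, Real.norm_eq_abs, sq_abs]

lemma phi_add (a b : ℤ × ℤ × ℤ) : phi (a + b) = phi a + phi b := by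
  ext i
  fin_cases i <;>
    simp [phi, Prod.fst_add, Prod.snd_add] <;> push_cast <;> ring

lemma znorm_neg (m : ℤ × ℤ × ℤ) : znorm (-m) = znorm m := by
  simp [znorm]

lemma znorm_tri (m n : ℤ × ℤ × ℤ) : znorm n ≤ znorm m + znorm (m + n) := by
  have h : n = -m + (m + n) := by ring
  calc znorm n = ‖phi (-m) + phi (m + n)‖ := by rw [← phi_add, ← h, znorm_eq]
    _ ≤ ‖phi (-m)‖ + ‖phi (m + n)‖ := norm_add_le _ _
    _ = znorm m + znorm (m + n) := by rw [← znorm_eq, ← znorm_eq, znorm_neg]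

lemma one_le_znorm {m : ℤ × ℤ × ℤ} (hm : m ≠ 0) : 1 ≤ znorm m := by
  obtain ⟨a, b, c⟩ := m
  have h : a ≠ 0 ∨ b ≠ 0 ∨ c ≠ 0 := by
    by_contra h
    push_neg at h
    exact hm (by simp [Prod.ext_iff, h.1, h.2.1, h.2.2])
  have h1 : (1 : ℝ) ≤ (a : ℝ) ^ 2 + (b : ℝ) ^ 2 + (c : ℝ) ^ 2 := by
    have : (1 : ℤ) ≤ a ^ 2 + b ^ 2 + c ^ 2 := by
      rcases h with h | h | h
      · have := Int.one_le_abs (by exact_mod_cast h : a ≠ 0)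
        nlinarith [sq_nonneg b, sq_nonneg c, sq_abs a]
      · have := Int.one_le_abs (by exact_mod_cast h : b ≠ 0)
        nlinarith [sq_nonneg a, sq_nonneg c, sq_abs b]
      · have := Int.one_le_abs (by exact_mod_cast h : c ≠ 0)
        nlinarith [sq_nonneg a, sq_nonneg b, sq_abs c]
    exact_mod_cast this
  calc (1:ℝ) = Real.sqrt 1 := (Real.sqrt_one).symm
    _ ≤ _ := Real.sqrt_le_sqrt h1

def Kf (m : ℤ × ℤ × ℤ) : ℕ := max m.1.natAbs (max m.2.1.natAbs m.2.2.natAbs)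

lemma Kf_le_znorm (m : ℤ × ℤ × ℤ) : (Kf m : ℝ) ≤ znorm m := by
  have h1 : Kf m = m.1.natAbs ∨ Kf m = m.2.1.natAbs ∨ Kf m = m.2.2.natAbs := by
    unfold Kf; omega
  have h2 : ((Kf m : ℝ)) ^ 2 ≤ (m.1 : ℝ) ^ 2 + (m.2.1 : ℝ) ^ 2 + (m.2.2 : ℝ) ^ 2 := by
    rcases h1 with h | h | h <;> rw [h] <;>
      rw [Nat.cast_natAbs] <;> push_cast <;>
      nlinarith [sq_nonneg ((m.1:ℝ)), sq_nonneg ((m.2.1:ℝ)), sq_nonneg ((m.2.2:ℝ)),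
        sq_abs ((m.1:ℝ)), sq_abs ((m.2.1:ℝ)), sq_abs ((m.2.2:ℝ))]
  calc (Kf m : ℝ) = Real.sqrt ((Kf m : ℝ) ^ 2) := by
        rw [Real.sqrt_sq (by positivity)]
    _ ≤ znorm m := Real.sqrt_le_sqrt h2

lemma one_le_Kf {m : ℤ × ℤ × ℤ} (hm : m ≠ 0) : 1 ≤ Kf m := by
  obtain ⟨a, b, c⟩ := m
  have h : ¬(a = 0 ∧ b = 0 ∧ c = 0) := fun h => hm (by simp [Prod.ext_iff, h.1, h.2.1, h.2.2])
  unfold Kf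
  simp only
  omega

noncomputable def Bf (k : ℕ) : Finset (ℤ × ℤ × ℤ) :=
  let J : Finset ℤ := Finset.Icc (-(k : ℤ)) k
  let P : Finset ℤ := {(k : ℤ), -(k : ℤ)}
  (P ×ˢ (J ×ˢ J)) ∪ ((J ×ˢ (P ×ˢ J)) ∪ (J ×ˢ (J ×ˢ P)))

lemma mem_Bf {k : ℕ} {m : ℤ × ℤ × ℤ} (h : Kf m = k) : m ∈ Bf k := by
  obtain ⟨a, b, c⟩ := m
  unfold Kf at h
  simp only at h
  simp only [Bf, Finset.mem_union, Finset.mem_product, Finset.mem_insert,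
    Finset.mem_singleton, Finset.mem_Icc]
  omega

lemma card_Bf (k : ℕ) : (Bf k).card ≤ 6 * (2 * k + 1) ^ 2 := by
  have hJ : (Finset.Icc (-(k : ℤ)) k).card = 2 * k + 1 := by
    rw [Int.card_Icc]; omega
  have hP : ({(k : ℤ), -(k : ℤ)} : Finset ℤ).card ≤ 2 :=
    (Finset.card_insert_le _ _).trans (by simp)
  calc (Bf k).card ≤ (({(k : ℤ), -(k : ℤ)} : Finset ℤ) ×ˢ
        (Finset.Icc (-(k : ℤ)) k ×ˢ Finset.Icc (-(k : ℤ)) k)).card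
      + ((Finset.Icc (-(k : ℤ)) k ×ˢ (({(k : ℤ), -(k : ℤ)} : Finset ℤ) ×ˢ Finset.Icc (-(k : ℤ)) k)).card
      + (Finset.Icc (-(k : ℤ)) k ×ˢ (Finset.Icc (-(k : ℤ)) k ×ˢ ({(k : ℤ), -(k : ℤ)} : Finset ℤ))).card) := by
        refine (Finset.card_union_le _ _).trans ?_
        gcongr
        exact Finset.card_union_le _ _
    _ ≤ 6 * (2 * k + 1) ^ 2 := by
        simp only [Finset.card_product, hJ]
        nlinarith [hP]

lemma L1 {t : ℝ} (ht : 0 < t) (ht1 : t ≤ 1) :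
    ∑' m : ℤ × ℤ × ℤ, ENNReal.ofReal (Real.exp (-(znorm m ^ 2 * t)) / znorm m)
      ≤ ENNReal.ofReal (216 * Real.exp 1 / t) := by
  set u := Real.sqrt t with hu_def
  have hu : 0 < u := Real.sqrt_pos.mpr ht
  have hu1 : u ≤ 1 := by
    rw [hu_def, show (1:ℝ) = Real.sqrt 1 by rw [Real.sqrt_one]]
    exact Real.sqrt_le_sqrt ht1
  have hut : u ^ 2 = t := Real.sq_sqrt ht.le
  set r := Real.exp (-u) with hr_def
  have hr0 : 0 < r := Real.exp_pos _
  have hr1 : r < 1 := Real.exp_lt_one_iff.mpr (by linarith)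
  have hrsub : u / 2 ≤ 1 - r := by
    have h1 : r * Real.exp u = 1 := by rw [hr_def, ← Real.exp_add]; simp
    have h2 : u + 1 ≤ Real.exp u := Real.add_one_le_exp u
    nlinarith [Real.exp_pos u]
  -- the ℕ-indexed majorant
  set H : ℕ → ℝ≥0∞ := fun k => ENNReal.ofReal (Real.exp (-((k:ℝ) ^ 2 * t)) / (k:ℝ)) with hH_def
  -- pointwise bound
  have hpt : ∀ m : ℤ × ℤ × ℤ,
      ENNReal.ofReal (Real.exp (-(znorm m ^ 2 * t)) / znorm m) ≤ H (Kf m) := by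
    intro m
    by_cases hm : m = 0
    · subst hm
      have : znorm 0 = 0 := by simp [znorm]
      simp [this]
    · have hK1 : (1:ℝ) ≤ (Kf m : ℝ) := by exact_mod_cast one_le_Kf hm
      have hKz : (Kf m : ℝ) ≤ znorm m := Kf_le_znorm m
      apply ENNReal.ofReal_le_ofReal
      apply div_le_div₀ (Real.exp_pos _).le _ (by linarith) hKz
      apply Real.exp_le_exp.mpr
      have : ((Kf m : ℝ)) ^ 2 ≤ znorm m ^ 2 := by nlinarith
      nlinarith
  calc ∑' m : ℤ × ℤ × ℤ, ENNReal.ofReal (Real.exp (-(znorm m ^ 2 * t)) / znorm m)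
      ≤ ∑' m : ℤ × ℤ × ℤ, H (Kf m) := ENNReal.tsum_le_tsum hpt
    _ = ∑' k : ℕ, ∑' m : {m : ℤ × ℤ × ℤ // Kf m = k}, H k := by
        rw [← (Equiv.sigmaFiberEquiv Kf).tsum_eq (fun m => H (Kf m))]
        rw [ENNReal.tsum_sigma' (fun p => H (Kf ((Equiv.sigmaFiberEquiv Kf) p)))]
        exact tsum_congr fun k => tsum_congr fun m => by
          simp [Equiv.sigmaFiberEquiv, m.2]
    _ ≤ ∑' k : ℕ, ENNReal.ofReal (54 * Real.exp 1 * ((k : ℝ) * r ^ k)) := by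
        apply ENNReal.tsum_le_tsum
        intro k
        -- fiber sum ≤ card bound * H k
        have hfib : ∑' m : {m : ℤ × ℤ × ℤ // Kf m = k}, H k
            ≤ (6 * (2 * k + 1) ^ 2 : ℕ) * H k := by
          have hsub : {m : ℤ × ℤ × ℤ | Kf m = k} ⊆ ↑(Bf k) := fun m hm => mem_Bf hm
          calc ∑' m : {m : ℤ × ℤ × ℤ // Kf m = k}, H k
              ≤ ∑' m : ↑(Bf k : Set (ℤ × ℤ × ℤ)), H k :=
                ENNReal.tsum_mono_subtype (fun _ => H k) hsub
            _ = ∑ m ∈ Bf k, H k := Finset.tsum_subtype' (Bf k) (fun _ => H k)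
            _ = (Bf k).card • H k := Finset.sum_const _
            _ ≤ (6 * (2 * k + 1) ^ 2 : ℕ) * H k := by
                rw [nsmul_eq_mul]
                exact mul_le_mul_left (by exact_mod_cast Nat.cast_le.mpr (card_Bf k)) _
        refine hfib.trans ?_
        by_cases hk : k = 0
        · subst hk; simp [hH_def]
        · have hk1 : (1:ℝ) ≤ (k:ℝ) := by exact_mod_cast Nat.one_le_iff_ne_zero.mpr hk
          have hexp : Real.exp (-((k:ℝ) ^ 2 * t)) ≤ Real.exp 1 * r ^ k := by
            have hrk : r ^ k = Real.exp (-((k:ℝ) * u)) := by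
              rw [hr_def, ← Real.exp_nat_mul]
              ring_nf
            rw [hrk, ← Real.exp_add]
            apply Real.exp_le_exp.mpr
            have hy : 0 ≤ (k:ℝ) * u := by positivity
            nlinarith [sq_nonneg ((k:ℝ) * u - 1), hut, sq_nonneg ((k:ℝ))]
          have hcast : ((6 * (2 * k + 1) ^ 2 : ℕ) : ℝ≥0∞) * H k
              = ENNReal.ofReal ((6 * (2 * (k:ℝ) + 1) ^ 2) * (Real.exp (-((k:ℝ) ^ 2 * t)) / (k:ℝ))) := by
            rw [hH_def]
            rw [← ENNReal.ofReal_natCast, ← ENNReal.ofReal_mul (by positivity)]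
            congr 1
            push_cast
            ring
          rw [hcast]
          apply ENNReal.ofReal_le_ofReal
          have h2k : (6 * (2 * (k:ℝ) + 1) ^ 2) / (k:ℝ) ≤ 54 * (k:ℝ) := by
            rw [div_le_iff₀ (by linarith)]
            nlinarith
          calc (6 * (2 * (k:ℝ) + 1) ^ 2) * (Real.exp (-((k:ℝ) ^ 2 * t)) / (k:ℝ))
              = ((6 * (2 * (k:ℝ) + 1) ^ 2) / (k:ℝ)) * Real.exp (-((k:ℝ) ^ 2 * t)) := by ring
            _ ≤ (54 * (k:ℝ)) * (Real.exp 1 * r ^ k) := by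
                apply mul_le_mul h2k hexp (Real.exp_pos _).le (by positivity)
            _ = 54 * Real.exp 1 * ((k : ℝ) * r ^ k) := by ring
    _ ≤ ENNReal.ofReal (216 * Real.exp 1 / t) := by
        have hsumm : Summable (fun k : ℕ => (k : ℝ) * r ^ k) := by
          have := summable_pow_mul_geometric_of_norm_lt_one (R := ℝ) 1
            (r := r) (by rw [Real.norm_eq_abs, abs_of_pos hr0]; exact hr1)
          simpa using this
        rw [← ENNReal.ofReal_tsum_of_nonneg (fun k => by positivity)
          (hsumm.mul_left (54 * Real.exp 1))]
        apply ENNReal.ofReal_le_ofReal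
        rw [tsum_mul_left, tsum_coe_mul_geometric_of_norm_lt_one
          (by rw [Real.norm_eq_abs, abs_of_pos hr0]; exact hr1)]
        have h1r : 0 < 1 - r := by linarith
        have hdiv : r / (1 - r) ^ 2 ≤ 4 / t := by
          rw [div_le_div_iff₀ (by positivity) ht]
          nlinarith [mul_le_mul hrsub hrsub (by positivity) h1r.le]
        calc 54 * Real.exp 1 * (r / (1 - r) ^ 2) ≤ 54 * Real.exp 1 * (4 / t) := by
              apply mul_le_mul_of_nonneg_left hdiv (by positivity)
          _ = 216 * Real.exp 1 / t := by ring

end Stmt14Aux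

open Stmt14Aux in
theorem stmt14 :
    ∃ c > 0, ∀ s ∈ Set.Ioc (0:ℝ) 1, ∀ m₄ : ℤ × ℤ × ℤ, m₄ ≠ 0 →
      (∑' m₃ : {m : ℤ × ℤ × ℤ // m ≠ 0 ∧ m ≠ -m₄},
          ENNReal.ofReal
            (Real.exp (-(znorm m₃ ^ 2 * s)) / (znorm m₃ * znorm (↑m₃ + m₄)))) ≤
        ENNReal.ofReal (c / (s * znorm m₄)) := by
  refine ⟨1728 * Real.exp 1, by positivity, ?_⟩
  rintro s ⟨hs0, hs1⟩ m₄ hm₄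
  have hd1 : 1 ≤ znorm m₄ := one_le_znorm hm₄
  have hd0 : 0 < znorm m₄ := by linarith
  have hs0' : 0 < s / 2 := by linarith
  have hs1' : s / 2 ≤ 1 := by linarith
  -- pointwise bound on the full lattice
  have hptw : ∀ m : ℤ × ℤ × ℤ,
      ENNReal.ofReal (Real.exp (-(znorm m ^ 2 * s)) / (znorm m * znorm (m + m₄)))
        ≤ ENNReal.ofReal (2 / znorm m₄ * (Real.exp (-(znorm m ^ 2 * (s / 2))) / znorm m))
          + ENNReal.ofReal (2 / znorm m₄ *
              (Real.exp (-(znorm (m + m₄) ^ 2 * (s / 2))) / znorm (m + m₄))) := by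
    intro m
    have haz : 0 ≤ znorm m := znorm_nonneg m
    have hbz : 0 ≤ znorm (m + m₄) := znorm_nonneg (m + m₄)
    rw [← ENNReal.ofReal_add (by positivity) (by positivity)]
    apply ENNReal.ofReal_le_ofReal
    by_cases hm0 : m = 0
    · have hz : znorm m = 0 := by subst hm0; simp [znorm]
      rw [hz, zero_mul, _root_.div_zero]
      positivity
    by_cases hm4 : m = -m₄
    · have hz : znorm (m + m₄) = 0 := by subst hm4; simp [znorm]
      rw [hz, mul_zero, _root_.div_zero]
      positivity
    have ha : 1 ≤ znorm m := one_le_znorm hm0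
    have hb : 1 ≤ znorm (m + m₄) :=
      one_le_znorm fun h => hm4 (eq_neg_of_add_eq_zero_left h)
    have htri : znorm m₄ ≤ znorm m + znorm (m + m₄) := znorm_tri m m₄
    rcases le_total (znorm m) (znorm (m + m₄)) with hab | hab
    · -- znorm (m+m₄) ≥ d/2 : keep the first term
      have h1b : 1 / znorm (m + m₄) ≤ 2 / znorm m₄ := by
        rw [div_le_div_iff₀ (by linarith) hd0]; linarith
      have hexp : Real.exp (-(znorm m ^ 2 * s)) ≤ Real.exp (-(znorm m ^ 2 * (s / 2))) := by
        apply Real.exp_le_exp.mpr; nlinarith [sq_nonneg (znorm m)]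
      calc Real.exp (-(znorm m ^ 2 * s)) / (znorm m * znorm (m + m₄))
          = (Real.exp (-(znorm m ^ 2 * s)) / znorm m) * (1 / znorm (m + m₄)) := by ring
        _ ≤ (Real.exp (-(znorm m ^ 2 * (s / 2))) / znorm m) * (2 / znorm m₄) := by
            apply mul_le_mul _ h1b (by positivity) (by positivity)
            exact (div_le_div_iff_of_pos_right (by linarith : (0:ℝ) < znorm m)).mpr hexp
        _ = 2 / znorm m₄ * (Real.exp (-(znorm m ^ 2 * (s / 2))) / znorm m) := by ring
        _ ≤ _ := le_add_of_nonneg_right (by positivity)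
    · -- znorm m ≥ d/2 : keep the second term
      have h1a : 1 / znorm m ≤ 2 / znorm m₄ := by
        rw [div_le_div_iff₀ (by linarith) hd0]; linarith
      have hsq : znorm (m + m₄) ^ 2 ≤ znorm m ^ 2 := by nlinarith
      have hexp : Real.exp (-(znorm m ^ 2 * s))
          ≤ Real.exp (-(znorm (m + m₄) ^ 2 * (s / 2))) := by
        apply Real.exp_le_exp.mpr
        nlinarith [mul_le_mul_of_nonneg_right hsq hs0.le]
      calc Real.exp (-(znorm m ^ 2 * s)) / (znorm m * znorm (m + m₄))
          = (1 / znorm m) * (Real.exp (-(znorm m ^ 2 * s)) / znorm (m + m₄)) := by ring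
        _ ≤ (2 / znorm m₄) * (Real.exp (-(znorm (m + m₄) ^ 2 * (s / 2))) / znorm (m + m₄)) := by
            apply mul_le_mul h1a _ (by positivity) (by positivity)
            exact (div_le_div_iff_of_pos_right (by linarith : (0:ℝ) < znorm (m + m₄))).mpr hexp
        _ ≤ _ := le_add_of_nonneg_left (by positivity)
  calc (∑' m₃ : {m : ℤ × ℤ × ℤ // m ≠ 0 ∧ m ≠ -m₄},
          ENNReal.ofReal
            (Real.exp (-(znorm m₃ ^ 2 * s)) / (znorm m₃ * znorm (↑m₃ + m₄))))
      ≤ ∑' m : ℤ × ℤ × ℤ,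
          ENNReal.ofReal (Real.exp (-(znorm m ^ 2 * s)) / (znorm m * znorm (m + m₄))) :=
        ENNReal.tsum_comp_le_tsum_of_injective Subtype.val_injective _
    _ ≤ ∑' m : ℤ × ℤ × ℤ,
          (ENNReal.ofReal (2 / znorm m₄ * (Real.exp (-(znorm m ^ 2 * (s / 2))) / znorm m))
            + ENNReal.ofReal (2 / znorm m₄ *
                (Real.exp (-(znorm (m + m₄) ^ 2 * (s / 2))) / znorm (m + m₄)))) :=
        ENNReal.tsum_le_tsum hptw
    _ = (∑' m : ℤ × ℤ × ℤ,
          ENNReal.ofReal (2 / znorm m₄ * (Real.exp (-(znorm m ^ 2 * (s / 2))) / znorm m)))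
        + ∑' m : ℤ × ℤ × ℤ,
            ENNReal.ofReal (2 / znorm m₄ *
              (Real.exp (-(znorm (m + m₄) ^ 2 * (s / 2))) / znorm (m + m₄))) :=
        ENNReal.tsum_add
    _ = (∑' m : ℤ × ℤ × ℤ,
          ENNReal.ofReal (2 / znorm m₄ * (Real.exp (-(znorm m ^ 2 * (s / 2))) / znorm m)))
        + ∑' m : ℤ × ℤ × ℤ,
            ENNReal.ofReal (2 / znorm m₄ * (Real.exp (-(znorm m ^ 2 * (s / 2))) / znorm m)) := by
        congr 1
        exact (Equiv.addRight m₄).tsum_eq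
          (fun n => ENNReal.ofReal (2 / znorm m₄ * (Real.exp (-(znorm n ^ 2 * (s / 2))) / znorm n)))
    _ ≤ ENNReal.ofReal (1728 * Real.exp 1 / (s * znorm m₄)) := by
        have hone : ∑' m : ℤ × ℤ × ℤ,
            ENNReal.ofReal (2 / znorm m₄ * (Real.exp (-(znorm m ^ 2 * (s / 2))) / znorm m))
            ≤ ENNReal.ofReal (864 * Real.exp 1 / (s * znorm m₄)) := by
          calc ∑' m : ℤ × ℤ × ℤ,
              ENNReal.ofReal (2 / znorm m₄ * (Real.exp (-(znorm m ^ 2 * (s / 2))) / znorm m))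
              = ENNReal.ofReal (2 / znorm m₄) * ∑' m : ℤ × ℤ × ℤ,
                  ENNReal.ofReal (Real.exp (-(znorm m ^ 2 * (s / 2))) / znorm m) := by
                rw [← ENNReal.tsum_mul_left]
                exact tsum_congr fun m =>
                  ENNReal.ofReal_mul (p := 2 / znorm m₄) (by positivity)
            _ ≤ ENNReal.ofReal (2 / znorm m₄) * ENNReal.ofReal (216 * Real.exp 1 / (s / 2)) :=
                mul_le_mul_right (L1 hs0' hs1') _
            _ = ENNReal.ofReal (2 / znorm m₄ * (216 * Real.exp 1 / (s / 2))) :=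
                (ENNReal.ofReal_mul (p := 2 / znorm m₄) (by positivity)).symm
            _ = ENNReal.ofReal (864 * Real.exp 1 / (s * znorm m₄)) := by
                congr 1
                field_simp
                ring
        calc _ ≤ ENNReal.ofReal (864 * Real.exp 1 / (s * znorm m₄))
              + ENNReal.ofReal (864 * Real.exp 1 / (s * znorm m₄)) := add_le_add hone hone
          _ = ENNReal.ofReal (1728 * Real.exp 1 / (s * znorm m₄)) := by
              rw [← ENNReal.ofReal_add (by positivity) (by positivity)]
              congr 1
              ring
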